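/- Suppose ℋ contains, for every group a ∈ 𝒜, the maximally discriminatory classifiers h_a = 1{A=a} and h̄_a = 1{A≠a}, the fairness constraints are only on false positive rates, B > |𝒜| − 1, and (Q̃, λ̃) is a ν-approximate equilibrium of the Lagrangian game. Then max_{a∈𝒜} |FP_a(Q̃) − FP_0(Q̃)| ≤ γ + 2ν / (B − (|𝒜| − 1)). -/

import Mathlib

open Finset

/-- Empirical false positive rate on group `a` of the predictions `pred`. -/
noncomputable def FPrate10 {m : ℕ} {𝒜 : Type*} [Fintype 𝒜] [DecidableEq 𝒜]
    (A : Fin m → 𝒜) (Ys : Fin m → Bool) (pred : Fin m → Bool) (a : 𝒜) : ℝ :=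
  ((univ.filter fun i => A i = a ∧ Ys i = false ∧ pred i = true).card : ℝ) /
    ((univ.filter fun i => A i = a ∧ Ys i = false).card : ℝ)

/-- Empirical error of the predictions `pred`. -/
noncomputable def errRate10 {m : ℕ} (Ys pred : Fin m → Bool) : ℝ :=
  ((univ.filter fun i => pred i ≠ Ys i).card : ℝ) / m

section Aux

variable {m : ℕ} {𝒜 : Type*} [Fintype 𝒜] [DecidableEq 𝒜]

lemma errRate10_nonneg (Ys pred : Fin m → Bool) : 0 ≤ errRate10 Ys pred :=
  div_nonneg (Nat.cast_nonneg _) (Nat.cast_nonneg _)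

lemma errRate10_le_one (Ys pred : Fin m → Bool) : errRate10 Ys pred ≤ 1 := by
  unfold errRate10
  have h : ((univ : Finset (Fin m)).filter fun i => pred i ≠ Ys i).card ≤ m := by
    simpa using Finset.card_filter_le (univ : Finset (Fin m)) _
  rcases Nat.eq_zero_or_pos m with hm | hm
  · subst hm; simp
  · exact div_le_one_of_le₀ (by exact_mod_cast h) (by positivity)

lemma FPrate10_eq_ind (A : Fin m → 𝒜) (Ys : Fin m → Bool) (pred : Fin m → Bool)
    (a b : 𝒜) (hpred : ∀ i, pred i = true ↔ A i = a)
    (hne : ((univ : Finset (Fin m)).filter fun i => A i = b ∧ Ys i = false).Nonempty) :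
    FPrate10 A Ys pred b = if b = a then 1 else 0 := by
  have hc : (0:ℝ) < (((univ : Finset (Fin m)).filter fun i => A i = b ∧ Ys i = false).card : ℝ) := by
    exact_mod_cast Finset.card_pos.mpr hne
  unfold FPrate10
  split_ifs with hba
  · subst hba
    have heq : ((univ : Finset (Fin m)).filter fun i => A i = b ∧ Ys i = false ∧ pred i = true)
        = (univ : Finset (Fin m)).filter fun i => A i = b ∧ Ys i = false := by
      ext i
      simp only [mem_filter, mem_univ, true_and, hpred i]
      tauto
    rw [heq]
    exact div_self hc.ne'
  · have heq : ((univ : Finset (Fin m)).filter fun i => A i = b ∧ Ys i = false ∧ pred i = true)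
        = (∅ : Finset (Fin m)) := by
      ext i
      simp only [mem_filter, mem_univ, true_and, hpred i, Finset.notMem_empty, iff_false]
      rintro ⟨h1, _, h3⟩
      exact hba (h1.symm.trans h3)
    rw [heq]
    simp

lemma FPrate10_eq_ind' (A : Fin m → 𝒜) (Ys : Fin m → Bool) (pred : Fin m → Bool)
    (a b : 𝒜) (hpred : ∀ i, pred i = true ↔ A i ≠ a)
    (hne : ((univ : Finset (Fin m)).filter fun i => A i = b ∧ Ys i = false).Nonempty) :
    FPrate10 A Ys pred b = if b = a then 0 else 1 := by
  have hc : (0:ℝ) < (((univ : Finset (Fin m)).filter fun i => A i = b ∧ Ys i = false).card : ℝ) := by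
    exact_mod_cast Finset.card_pos.mpr hne
  unfold FPrate10
  split_ifs with hba
  · subst hba
    have heq : ((univ : Finset (Fin m)).filter fun i => A i = b ∧ Ys i = false ∧ pred i = true)
        = (∅ : Finset (Fin m)) := by
      ext i
      simp only [mem_filter, mem_univ, true_and, hpred i, Finset.notMem_empty, iff_false]
      rintro ⟨h1, _, h3⟩
      exact h3 h1
    rw [heq]
    simp
  · have heq : ((univ : Finset (Fin m)).filter fun i => A i = b ∧ Ys i = false ∧ pred i = true)
        = (univ : Finset (Fin m)).filter fun i => A i = b ∧ Ys i = false := by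
      ext i
      simp only [mem_filter, mem_univ, true_and, hpred i]
      constructor
      · rintro ⟨h1, h2, _⟩; exact ⟨h1, h2⟩
      · rintro ⟨h1, h2⟩; exact ⟨h1, h2, fun h => hba (h1.symm.trans h)⟩
    rw [heq]
    exact div_self hc.ne'

lemma arith_aux10 (B k ν x g S' : ℝ) (h1 : B * x ≤ S' + 2 * ν) (h2 : S' ≤ k * g)
    (h3 : g ≤ x) (h4 : 0 ≤ k) (h5 : k < B) : x ≤ 2 * ν / (B - k) := by
  rw [le_div_iff₀ (by linarith)]
  nlinarith

end Aux

/-- if `ℋ` contains the maximally discriminatory classifiers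
`h_a = 1{A=a}` and `h̄_a = 1{A≠a}` for every group `a`, the constraints are only
on false positive rates, `B > |𝒜| − 1`, and `(Q̃, λ̃)` is a `ν`-approximate
equilibrium of the Lagrangian game, then every group FP disparity of `Q̃` is at
most `γ + 2ν/(B − (|𝒜| − 1))`. -/
theorem fp_disparity_with_discriminatory_classifiers
    {m : ℕ} {𝒜 : Type*} [Fintype 𝒜] [DecidableEq 𝒜] {ℋ : Type*} [Fintype ℋ]
    (A : Fin m → 𝒜) (Ys : Fin m → Bool) (eval : ℋ → Fin m → Bool)
    (a0 : 𝒜) (γ B ν : ℝ) (hγ : 0 ≤ γ) (hν : 0 ≤ ν)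
    (hB : ((Fintype.card 𝒜 : ℝ) - 1) < B)
    (hgroups : ∀ a : 𝒜, ((univ : Finset (Fin m)).filter
        fun i => A i = a ∧ Ys i = false).Nonempty)
    (hdiscr : ∀ a : 𝒜, ∃ h : ℋ, ∀ i, eval h i = decide (A i = a))
    (hdiscr' : ∀ a : 𝒜, ∃ h : ℋ, ∀ i, eval h i = decide (A i ≠ a))
    -- the Lagrangian payoff of a mixed classifier `Q` against a dual `lam`
    (L : (ℋ → ℝ) → ({a : 𝒜 // a ≠ a0} × Bool → ℝ) → ℝ)
    (hLdef : ∀ Q lam, L Q lam =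
      (∑ h, Q h * errRate10 Ys (eval h)) +
        ∑ p : {a : 𝒜 // a ≠ a0} × Bool, lam p *
          (if p.2 then
              (∑ h, Q h * FPrate10 A Ys (eval h) p.1.1)
                - (∑ h, Q h * FPrate10 A Ys (eval h) a0) - γ
            else
              (∑ h, Q h * FPrate10 A Ys (eval h) a0)
                - (∑ h, Q h * FPrate10 A Ys (eval h) p.1.1) - γ))
    (Qtil : ℋ → ℝ) (hQtil : (∀ h, 0 ≤ Qtil h) ∧ ∑ h, Qtil h = 1)
    (ltil : {a : 𝒜 // a ≠ a0} × Bool → ℝ)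
    (hltil : (∀ p, 0 ≤ ltil p) ∧ ∑ p, |ltil p| ≤ B)
    (heq1 : ∀ Q : ℋ → ℝ, (∀ h, 0 ≤ Q h) → (∑ h, Q h = 1) →
      L Qtil ltil ≤ L Q ltil + ν)
    (heq2 : ∀ lam : {a : 𝒜 // a ≠ a0} × Bool → ℝ,
      (∀ p, 0 ≤ lam p) → (∑ p, |lam p| ≤ B) →
      L Qtil ltil ≥ L Qtil lam - ν) :
    ∀ a : 𝒜,
      |(∑ h, Qtil h * FPrate10 A Ys (eval h) a)
          - (∑ h, Qtil h * FPrate10 A Ys (eval h) a0)|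
        ≤ γ + 2 * ν / (B - ((Fintype.card 𝒜 : ℝ) - 1)) := by
  classical
  obtain ⟨hQ0, hQ1⟩ := hQtil
  obtain ⟨hl0, _⟩ := hltil
  intro a
  have hBpos : (0:ℝ) < B - ((Fintype.card 𝒜 : ℝ) - 1) := by linarith
  have hcard1 : (1:ℝ) ≤ (Fintype.card 𝒜 : ℝ) := by
    have : 0 < Fintype.card 𝒜 := Fintype.card_pos_iff.mpr ⟨a⟩
    exact_mod_cast this
  have hB0 : (0:ℝ) ≤ B := by linarith
  have hν' : 0 ≤ 2 * ν / (B - ((Fintype.card 𝒜 : ℝ) - 1)) := by positivity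
  by_cases haa0 : a = a0
  · subst haa0
    simp only [sub_self, abs_zero]
    linarith
  -- pick the discriminatory classifiers
  choose ha hha using hdiscr
  choose hb' hhb using hdiscr'
  -- abbreviations
  set FP : 𝒜 → ℝ := fun b => ∑ h, Qtil h * FPrate10 A Ys (eval h) b with hFPdef
  set er : ℝ := ∑ h, Qtil h * errRate10 Ys (eval h) with herdef
  set d : 𝒜 → ℝ := fun b => FP b - FP a0 with hddef
  set α : 𝒜 → ℝ := fun b => max (-(d b) - γ) 0 with hαdef
  set β : 𝒜 → ℝ := fun b => max (d b - γ) 0 with hβdef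
  set T : Finset 𝒜 := univ.filter (· ≠ a0) with hTdef
  set S : ℝ := ∑ c ∈ T, (α c + β c) with hSdef
  have hα0 : ∀ b, 0 ≤ α b := fun b => le_max_right _ _
  have hβ0 : ∀ b, 0 ≤ β b := fun b => le_max_right _ _
  have hS0 : 0 ≤ S := Finset.sum_nonneg fun c _ => add_nonneg (hα0 c) (hβ0 c)
  have h1S : (0:ℝ) < 1 + S := by linarith
  have hFha : ∀ c b2, FPrate10 A Ys (eval (ha c)) b2 = if b2 = c then 1 else 0 := by
    intro c b2
    exact FPrate10_eq_ind A Ys _ c b2 (fun i => by simp [hha c i]) (hgroups b2)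
  have hFhb : ∀ c b2, FPrate10 A Ys (eval (hb' c)) b2 = if b2 = c then 0 else 1 := by
    intro c b2
    exact FPrate10_eq_ind' A Ys _ c b2 (fun i => by simp [hhb c i]) (hgroups b2)
  -- the repaired distribution
  set Q' : ℋ → ℝ := fun h =>
      (Qtil h + ∑ c ∈ T, ((if h = ha c then α c else 0) + (if h = hb' c then β c else 0)))
        / (1 + S) with hQ'def
  have key : ∀ f : ℋ → ℝ, ∑ h, Q' h * f h
      = ((∑ h, Qtil h * f h) + ∑ c ∈ T, (α c * f (ha c) + β c * f (hb' c))) / (1 + S) := by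
    intro f
    have hterm : ∀ h, Q' h * f h
        = (Qtil h * f h + ∑ c ∈ T, ((if h = ha c then α c * f h else 0)
            + (if h = hb' c then β c * f h else 0))) / (1 + S) := by
      intro h
      rw [hQ'def]
      rw [div_mul_eq_mul_div, add_mul, Finset.sum_mul]
      congr 2
      refine Finset.sum_congr rfl fun c _ => ?_
      rw [add_mul]
      congr 1 <;> split_ifs <;> simp
    rw [Finset.sum_congr rfl fun h _ => hterm h, ← Finset.sum_div]
    congr 1
    rw [Finset.sum_add_distrib, Finset.sum_comm]
    congr 1
    refine Finset.sum_congr rfl fun c _ => ?_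
    rw [Finset.sum_add_distrib]
    congr 1 <;> simp
  have hQ'nn : ∀ h, 0 ≤ Q' h := by
    intro h
    refine div_nonneg (add_nonneg (hQ0 h) (Finset.sum_nonneg fun c _ => add_nonneg ?_ ?_)) h1S.le
    · split_ifs; exacts [hα0 c, le_rfl]
    · split_ifs; exacts [hβ0 c, le_rfl]
  have hQ'1 : ∑ h, Q' h = 1 := by
    have hk := key fun _ => 1
    simp only [mul_one] at hk
    rw [hk, hQ1, ← hSdef]
    exact div_self h1S.ne'
  -- false positive rates of Q'
  have hFP' : ∀ b2, ∑ h, Q' h * FPrate10 A Ys (eval h) b2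
      = (FP b2 + ∑ c ∈ T, (α c * (if b2 = c then 1 else 0)
          + β c * (if b2 = c then 0 else 1))) / (1 + S) := by
    intro b2
    rw [key]
    simp only [hFha, hFhb, hFPdef]
  have hmemT : ∀ b2, b2 ∈ T ↔ b2 ≠ a0 := by
    intro b2; simp [hTdef]
  have hsum_split : ∀ b2, b2 ≠ a0 →
      ∑ c ∈ T, (α c * (if b2 = c then 1 else 0) + β c * (if b2 = c then 0 else 1))
        = α b2 + ((∑ c ∈ T, β c) - β b2) := by
    intro b2 hb2
    rw [Finset.sum_add_distrib]
    congr 1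
    · rw [Finset.sum_eq_single b2]
      · simp
      · intro c _ hne
        rw [if_neg (fun h => hne h.symm), mul_zero]
      · intro h; exact absurd ((hmemT b2).mpr hb2) h
    · have hcongr : ∀ c ∈ T, β c * (if b2 = c then 0 else 1)
          = β c - (if c = b2 then β c else 0) := by
        intro c _
        rcases eq_or_ne c b2 with h | h
        · subst h; simp
        · rw [if_neg (fun hh => h hh.symm), if_neg h, mul_one, sub_zero]
      rw [Finset.sum_congr rfl hcongr, Finset.sum_sub_distrib,
        Finset.sum_ite_eq' T b2 β, if_pos ((hmemT b2).mpr hb2)]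
  have hsum_a0 : ∑ c ∈ T, (α c * (if a0 = c then 1 else 0) + β c * (if a0 = c then 0 else 1))
      = ∑ c ∈ T, β c := by
    refine Finset.sum_congr rfl fun c hc => ?_
    have hc' : c ≠ a0 := (hmemT c).mp hc
    rw [if_neg (fun h => hc' h.symm), if_neg (fun h => hc' h.symm), mul_zero, zero_add, mul_one]
  -- the repaired distribution satisfies all constraints
  have hαβ : ∀ b2, -γ ≤ d b2 + α b2 - β b2 ∧ d b2 + α b2 - β b2 ≤ γ := by
    intro b2
    simp only [hαdef, hβdef]
    rcases max_cases (-(d b2) - γ) 0 with ⟨e1, l1⟩ | ⟨e1, l1⟩ <;>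
      rcases max_cases (d b2 - γ) 0 with ⟨e2, l2⟩ | ⟨e2, l2⟩ <;>
      rw [e1, e2] <;> constructor <;> linarith
  have hdisp' : ∀ b2, b2 ≠ a0 →
      |(∑ h, Q' h * FPrate10 A Ys (eval h) b2) - (∑ h, Q' h * FPrate10 A Ys (eval h) a0)| ≤ γ := by
    intro b2 hb2
    rw [hFP' b2, hFP' a0, hsum_split b2 hb2, hsum_a0, div_sub_div_same]
    have hnum : FP b2 + (α b2 + ((∑ c ∈ T, β c) - β b2)) - (FP a0 + ∑ c ∈ T, β c)
        = d b2 + α b2 - β b2 := by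
      simp only [hddef]; ring
    rw [hnum, abs_div, abs_of_pos h1S, div_le_iff₀ h1S]
    have h2 := hαβ b2
    have h3 : |d b2 + α b2 - β b2| ≤ γ := abs_le.mpr ⟨h2.1, h2.2⟩
    nlinarith
  -- error of Q'
  have her0 : 0 ≤ er := by
    rw [herdef]
    exact Finset.sum_nonneg fun h _ => mul_nonneg (hQ0 h) (errRate10_nonneg _ _)
  have herr' : ∑ h, Q' h * errRate10 Ys (eval h) ≤ er + S := by
    rw [key, ← herdef]
    have hE : ∑ c ∈ T, (α c * errRate10 Ys (eval (ha c)) + β c * errRate10 Ys (eval (hb' c))) ≤ S := by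
      rw [hSdef]
      refine Finset.sum_le_sum fun c _ => ?_
      have h1 := errRate10_le_one Ys (eval (ha c))
      have h2 := errRate10_le_one Ys (eval (hb' c))
      have h3 := errRate10_nonneg Ys (eval (ha c))
      have h4 := errRate10_nonneg Ys (eval (hb' c))
      nlinarith [hα0 c, hβ0 c]
    rw [div_le_iff₀ h1S]
    nlinarith
  -- upper bound on the Lagrangian value
  have hL1 : L Q' ltil ≤ er + S := by
    rw [hLdef]
    have h2 : ∑ p : {a : 𝒜 // a ≠ a0} × Bool, ltil p *
        (if p.2 then (∑ h, Q' h * FPrate10 A Ys (eval h) p.1.1)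
            - (∑ h, Q' h * FPrate10 A Ys (eval h) a0) - γ
          else (∑ h, Q' h * FPrate10 A Ys (eval h) a0)
            - (∑ h, Q' h * FPrate10 A Ys (eval h) p.1.1) - γ) ≤ 0 := by
      refine Finset.sum_nonpos fun p _ => mul_nonpos_of_nonneg_of_nonpos (hl0 p) ?_
      have hd := abs_le.mp (hdisp' p.1.1 p.1.2)
      split_ifs <;> linarith [hd.1, hd.2]
    linarith [herr']
  have hup : L Qtil ltil ≤ er + S + ν := by
    have := heq1 Q' hQ'nn hQ'1
    linarith
  -- pick the group with the maximal (clipped) disparity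
  have hTne : T.Nonempty := ⟨a, (hmemT a).mpr haa0⟩
  obtain ⟨bs, hbsT, hmax⟩ := Finset.exists_max_image T (fun c => α c + β c) hTne
  have hbne : bs ≠ a0 := (hmemT bs).mp hbsT
  have hTcard : (T.card : ℝ) = (Fintype.card 𝒜 : ℝ) - 1 := by
    have hT' : T = univ.erase a0 := by
      ext c; simp [hTdef, Finset.mem_erase]
    rw [hT', Finset.card_erase_of_mem (Finset.mem_univ _), Finset.card_univ]
    have h1 : 1 ≤ Fintype.card 𝒜 := Fintype.card_pos_iff.mpr ⟨a⟩
    push_cast [Nat.cast_sub h1]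
    ring
  have hSle : S ≤ ((Fintype.card 𝒜 : ℝ) - 1) * (α bs + β bs) := by
    have h1 : S ≤ ∑ _c ∈ T, (α bs + β bs) := Finset.sum_le_sum fun c hc => hmax c hc
    rw [Finset.sum_const, nsmul_eq_mul, hTcard] at h1
    exact h1
  -- lower bound on the Lagrangian value, from the dual best response
  have hdual : ∀ s : Bool,
      er + B * (if s then FP bs - FP a0 - γ else FP a0 - FP bs - γ) ≤ er + S + ν + ν := by
    intro s
    set p0 : {x : 𝒜 // x ≠ a0} × Bool := (⟨bs, hbne⟩, s) with hp0def
    set lam : {x : 𝒜 // x ≠ a0} × Bool → ℝ := fun p => if p = p0 then B else 0 with hlamdef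
    have h1 : ∀ p, 0 ≤ lam p := by
      intro p; rw [hlamdef]; dsimp only; split_ifs; exacts [hB0, le_rfl]
    have h2 : ∑ p, |lam p| ≤ B := by
      have : ∑ p : {x : 𝒜 // x ≠ a0} × Bool, |lam p| = B := by
        simp [hlamdef, apply_ite abs, abs_of_nonneg hB0, Finset.sum_ite_eq']
      linarith [this.le]
    have h4 : L Qtil lam = er + B * (if s then FP bs - FP a0 - γ else FP a0 - FP bs - γ) := by
      rw [hLdef, ← herdef]
      congr 1
      simp only [hlamdef, ite_mul, zero_mul]
      rw [Finset.sum_ite_eq' univ p0]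
      simp only [Finset.mem_univ, if_pos, hp0def]
      rfl
    have h3 := heq2 lam h1 h2
    rw [h4] at h3
    linarith [hup]
  have hd1 : B * (d bs - γ) ≤ S + 2 * ν := by
    have := hdual true
    simp only [if_true, hddef] at this ⊢
    linarith
  have hd2 : B * (-(d bs) - γ) ≤ S + 2 * ν := by
    have := hdual false
    simp only [Bool.false_eq_true, if_false, hddef] at this ⊢
    linarith
  have hdabs : B * (|d bs| - γ) ≤ S + 2 * ν := by
    rcases abs_cases (d bs) with ⟨h, _⟩ | ⟨h, _⟩ <;> rw [h]
    · exact hd1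
    · exact hd2
  -- relating α + β to the clipped disparity
  have hg : ∀ b2, |d b2| - γ ≤ α b2 + β b2 := by
    intro b2
    simp only [hαdef, hβdef]
    rcases abs_cases (d b2) with ⟨h, _⟩ | ⟨h, _⟩ <;> rw [h] <;>
      linarith [le_max_left (d b2 - γ) 0, le_max_right (-(d b2) - γ) 0,
        le_max_left (-(d b2) - γ) 0, le_max_right (d b2 - γ) 0]
  have hgle : ∀ b2, α b2 + β b2 ≤ max (|d b2| - γ) 0 := by
    intro b2
    simp only [hαdef, hβdef]
    rcases abs_cases (d b2) with ⟨h, h'⟩ | ⟨h, h'⟩ <;> rw [h]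
    · rw [max_eq_right (by linarith : -(d b2) - γ ≤ 0)]
      simp
    · rw [max_eq_right (by linarith : d b2 - γ ≤ 0)]
      simp
  -- finishing
  have hfinal : |d a| ≤ γ + 2 * ν / (B - ((Fintype.card 𝒜 : ℝ) - 1)) := by
    have hga : |d a| - γ ≤ α a + β a := hg a
    have hgamax : α a + β a ≤ α bs + β bs := hmax a ((hmemT a).mpr haa0)
    rcases le_or_gt (α bs + β bs) 0 with hcase | hcase
    · linarith
    · have hgs : α bs + β bs ≤ |d bs| - γ := by
        rcases max_cases (|d bs| - γ) 0 with ⟨e, _⟩ | ⟨e, _⟩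
        · have := hgle bs; rw [e] at this; exact this
        · have := hgle bs; rw [e] at this; linarith
      have hk0 : (0:ℝ) ≤ (Fintype.card 𝒜 : ℝ) - 1 := by linarith
      have hx2 : |d bs| - γ ≤ 2 * ν / (B - ((Fintype.card 𝒜 : ℝ) - 1)) :=
        arith_aux10 B _ ν _ _ S hdabs hSle hgs hk0 hB
      linarith
  simpa only [hddef, hFPdef] using hfinal
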